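/- Let ψ ∈ ℂⁿ be a unit vector, f : {1,…,n} → ℝ a labeling (eigenvalue) function, ρ = ψψ† the associated pure-state density matrix (ρ_{jk} = ψ_j · conj(ψ_k)), and ρ̂ its Lüders mixture with respect to f (ρ̂_{jk} = ρ_{jk} if f(j) = f(k), else 0). Then the two-measurement probability of distinct eigenvalues equals the quantum logical entropy of the post-measurement state: Σ_{(j,k) : f(j) ≠ f(k)} ‖ψ_j‖²·‖ψ_k‖² = 1 − tr[ρ̂²]. -/

import Mathlib

open scoped Classical

noncomputable section

/-- The pure-state density matrix `ρ = ψψ†` of a vector `ψ`. -/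
def pureDensity {n : ℕ} (ψ : Fin n → ℂ) : Matrix (Fin n) (Fin n) ℂ :=
  Matrix.of fun j k => ψ j * starRingEnd ℂ (ψ k)

/-- The Lüders mixture of a matrix `ρ` with respect to a labeling function `f`. -/
def luders {n : ℕ} (f : Fin n → ℝ) (ρ : Matrix (Fin n) (Fin n) ℂ) :
    Matrix (Fin n) (Fin n) ℂ :=
  Matrix.of fun j k => if f j = f k then ρ j k else 0

/-- For a unit vector `ψ` with eigenvalue labels `f`, the two-measurement
probability of getting distinct eigenvalues equals the quantum logical entropy
`1 − tr[ρ̂²]` of the post-measurement (Lüders) state `ρ̂`. -/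
theorem two_measurement_prob_eq_quantum_logical_entropy {n : ℕ}
    (ψ : Fin n → ℂ) (hψ : ∑ j, ‖ψ j‖ ^ 2 = 1) (f : Fin n → ℝ) :
    ((∑ j, ∑ k, if f j ≠ f k then ‖ψ j‖ ^ 2 * ‖ψ k‖ ^ 2 else 0 : ℝ) : ℂ)
      = 1 - Matrix.trace (luders f (pureDensity ψ) * luders f (pureDensity ψ)) := by
  have htr : Matrix.trace (luders f (pureDensity ψ) * luders f (pureDensity ψ))
      = ∑ j, ∑ k, if f j = f k then ((‖ψ j‖ ^ 2 * ‖ψ k‖ ^ 2 : ℝ) : ℂ) else 0 := by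
    simp only [Matrix.trace, Matrix.diag, Matrix.mul_apply, luders, pureDensity,
      Matrix.of_apply]
    refine Finset.sum_congr rfl fun j _ => Finset.sum_congr rfl fun k _ => ?_
    by_cases h : f j = f k
    · simp only [h, if_true, eq_comm (a := f j)]
      rw [show ψ j * starRingEnd ℂ (ψ k) * (ψ k * starRingEnd ℂ (ψ j))
          = (ψ j * starRingEnd ℂ (ψ j)) * (ψ k * starRingEnd ℂ (ψ k)) by ring]
      rw [Complex.mul_conj, Complex.mul_conj]
      simp only [Complex.normSq_eq_norm_sq]
      push_cast
      ring
    · simp [h, Ne.symm h]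
  rw [htr]
  have h1 : (1 : ℂ) = ∑ j, ∑ k, ((‖ψ j‖ ^ 2 * ‖ψ k‖ ^ 2 : ℝ) : ℂ) := by
    have := hψ
    push_cast
    rw [← Finset.sum_mul_sum]
    norm_cast
    rw [hψ]; norm_num
  rw [h1, ← Finset.sum_sub_distrib]
  push_cast
  refine Finset.sum_congr rfl fun j _ => ?_
  rw [← Finset.sum_sub_distrib]
  refine Finset.sum_congr rfl fun k _ => ?_
  by_cases h : f j = f k <;> simp [h]
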